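/- arXiv:1910.07372 — 4 statements merged into one kernel-verified Lean document; each statement's English description precedes it below -/
import Mathlib

section
/- Let M be a connected topological n-manifold without boundary. Then for any two points x, y ∈ M there exists a single chart containing both: an open set U ⊆ M with x ∈ U and y ∈ U together with a homeomorphism from U onto ℝⁿ = EuclideanSpace ℝ (Fin n). -/
open Metric Set Topology Classical

section Aux

variable {E : Type*} [NormedAddCommGroup E] [NormedSpace ℝ E]

set_option linter.unusedSectionVars false

/-- There is a compactly supported homeomorphism of a complete normed space moving `a` to `b`. -/
theorem exists_homeomorph_id_outside [CompleteSpace E] (a b : E) :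
    ∃ (h : E ≃ₜ E) (K : Set E), (∀ v ∉ K, h v = v) ∧ h a = b ∧ K = closedBall a (‖b - a‖ + 1) := by
  classical
  set w : E := b - a with hw
  set R : ℝ := ‖w‖ + 1 with hR
  have hR0 : 0 < R := by positivity
  set c : ℝ := ‖w‖ / R with hc
  have hc0 : 0 ≤ c := by positivity
  have hc1 : c < 1 := by
    rw [hc, div_lt_one hR0]; simp [hR]
  set φ : E → ℝ := fun v => max (1 - dist v a / R) 0 with hφ
  set f : E → E := fun v => v + φ v • w with hf
  have hφdiff : ∀ u v : E, |φ u - φ v| ≤ dist u v / R := by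
    intro u v
    refine le_trans (abs_max_sub_max_le_abs _ _ _) ?_
    have h1 : (1 - dist u a / R) - (1 - dist v a / R) = (dist v a - dist u a) / R := by ring
    rw [h1, abs_div, abs_of_pos hR0]
    gcongr
    rw [abs_sub_comm]
    exact abs_dist_sub_le u v a
  have key : ∀ u v : E, ‖φ u • w - φ v • w‖ ≤ c * dist u v := by
    intro u v
    rw [← sub_smul, norm_smul, Real.norm_eq_abs]
    calc |φ u - φ v| * ‖w‖ ≤ (dist u v / R) * ‖w‖ :=
          mul_le_mul_of_nonneg_right (hφdiff u v) (norm_nonneg w)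
      _ = c * dist u v := by rw [hc]; ring
  have lower : ∀ u v : E, (1 - c) * dist u v ≤ dist (f u) (f v) := by
    intro u v
    have h2 : f u - f v = (u - v) + (φ u • w - φ v • w) := by simp only [hf]; abel
    have h3 : ‖u - v‖ ≤ ‖(u - v) + (φ u • w - φ v • w)‖ + ‖φ u • w - φ v • w‖ := by
      calc ‖u - v‖ = ‖((u - v) + (φ u • w - φ v • w)) - (φ u • w - φ v • w)‖ := by
            rw [add_sub_cancel_right]
        _ ≤ _ := norm_sub_le _ _
    rw [dist_eq_norm, dist_eq_norm, h2]
    have h4 := key u v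
    rw [dist_eq_norm] at h4
    nlinarith [norm_nonneg (u - v)]
  have hφcont : Continuous φ := by
    apply Continuous.max ?_ continuous_const
    exact continuous_const.sub ((continuous_id.dist continuous_const).div_const R)
  have hfcont : Continuous f := continuous_id.add (hφcont.smul continuous_const)
  have hinj : Function.Injective f := by
    intro u v huv
    have := lower u v
    rw [huv, dist_self] at this
    have : dist u v = 0 := by nlinarith [dist_nonneg (x := u) (y := v)]
    exact dist_eq_zero.mp this
  have hsurj : Function.Surjective f := by
    intro u
    set F : E → E := fun v => u - φ v • w with hF
    have hcnn : (0:ℝ) ≤ c := hc0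
    have hlip : LipschitzWith ⟨c, hcnn⟩ F := by
      apply LipschitzWith.of_dist_le_mul
      intro p q
      have : F p - F q = φ q • w - φ p • w := by simp only [hF]; abel
      rw [dist_eq_norm, this]
      exact (by simpa [dist_comm] using key q p : _ ≤ c * dist p q)
    have hcontr : ContractingWith ⟨c, hcnn⟩ F := ⟨by exact_mod_cast hc1, hlip⟩
    have hne : Nonempty E := ⟨0⟩
    obtain ⟨v0, hfix⟩ : ∃ v0, F v0 = v0 := ⟨_, hcontr.fixedPoint_isFixedPt⟩
    refine ⟨v0, ?_⟩
    have h9 : u - φ v0 • w = v0 := hfix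
    show v0 + φ v0 • w = u
    nth_rewrite 1 [← h9]
    exact sub_add_cancel u (φ v0 • w)
  set Feq : E ≃ E := Equiv.ofBijective f ⟨hinj, hsurj⟩ with hFeq
  have hsymm_lip : LipschitzWith ((1 - c)⁻¹).toNNReal Feq.symm := by
    apply LipschitzWith.of_dist_le_mul
    intro p q
    have h5 := lower (Feq.symm p) (Feq.symm q)
    have h6 : f (Feq.symm p) = p := Feq.apply_symm_apply p
    have h7 : f (Feq.symm q) = q := Feq.apply_symm_apply q
    rw [h6, h7] at h5
    have h8 : (0:ℝ) < 1 - c := by linarith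
    rw [Real.coe_toNNReal _ (le_of_lt (inv_pos.mpr h8))]
    rw [le_inv_mul_iff₀ h8]
    exact h5
  refine ⟨⟨Feq, hfcont, hsymm_lip.continuous⟩, closedBall a R, ?_, ?_, rfl⟩
  · intro v hv
    have hdist : R < dist v a := by
      simpa [closedBall, not_le] using hv
    have hφv : φ v = 0 := by
      apply max_eq_right
      rw [sub_nonpos, le_div_iff₀ hR0, one_mul]
      exact le_of_lt hdist
    show f v = v
    simp [hf, hφv]
  · show f a = b
    have hφa : φ a = 1 := by simp [hφ, hR0.le]
    simp [hf, hφa, hw]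

variable {M : Type*} [TopologicalSpace M]

/-- Every point of a charted space has a chart whose target is all of `E`. -/
theorem exists_fullChart [ChartedSpace E M] (m : M) :
    ∃ e : OpenPartialHomeomorph M E, m ∈ e.source ∧ e.target = univ := by
  set c := chartAt E m with hc
  have hm : m ∈ c.source := mem_chart_source E m
  have hct : c m ∈ c.target := c.map_source hm
  obtain ⟨r, hr0, hball⟩ := Metric.isOpen_iff.mp c.open_target _ hct
  refine ⟨c.trans (OpenPartialHomeomorph.univBall (c m) r).symm, ?_, ?_⟩
  · rw [OpenPartialHomeomorph.trans_source]
    refine ⟨hm, ?_⟩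
    simp only [mem_preimage, OpenPartialHomeomorph.symm_source]
    rw [OpenPartialHomeomorph.univBall_target _ hr0]
    exact mem_ball_self hr0
  · rw [OpenPartialHomeomorph.trans_target]
    simp only [OpenPartialHomeomorph.symm_target, OpenPartialHomeomorph.univBall_source,
      univ_inter, OpenPartialHomeomorph.symm_symm]
    rw [eq_univ_iff_forall]
    intro u
    refine mem_preimage.mpr (hball ?_)
    have := (OpenPartialHomeomorph.univBall (c m) r).map_source (x := u) (by simp)
    rwa [OpenPartialHomeomorph.univBall_target _ hr0] at this

/-- The source of a full chart is homeomorphic to `E`. -/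
noncomputable def fullChartHomeomorph (e : OpenPartialHomeomorph M E) (he : e.target = univ) :
    ↥e.source ≃ₜ E :=
  e.toHomeomorphSourceTarget.trans ((Homeomorph.setCongr he).trans (Homeomorph.Set.univ E))

theorem symm_id_outside_aux (h : E ≃ₜ E) (K : Set E) (hid : ∀ v ∉ K, h v = v) :
    ∀ v ∉ K, h.symm v = v := by
  intro u hu
  have hK : ∀ v ∈ K, h v ∈ K := by
    intro v hv
    by_contra hnv
    have h2 : h v = v := h.injective (hid _ hnv)
    rw [← h2] at hv
    exact hnv hv
  have hmem : h.symm u ∉ K := by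
    intro hmem
    have := hK _ hmem
    rw [h.apply_symm_apply] at this
    exact hu this
  calc h.symm u = h (h.symm u) := (hid _ hmem).symm
    _ = u := h.apply_symm_apply u

/-- Transplant a self-map of `E` to a self-map of `M` using a chart, identity outside. -/
noncomputable def glue (e : OpenPartialHomeomorph M E) (h : E → E) : M → M :=
  fun m => if m ∈ e.source then e.symm (h (e m)) else m

theorem glue_comp (e : OpenPartialHomeomorph M E) (he : e.target = univ) (h1 h2 : E → E)
    (hcomp : ∀ u, h2 (h1 u) = u) (m : M) : glue e h2 (glue e h1 m) = m := by
  by_cases hm : m ∈ e.source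
  · have h1mem : e.symm (h1 (e m)) ∈ e.source := e.map_target (by rw [he]; trivial)
    have step1 : glue e h1 m = e.symm (h1 (e m)) := by simp [glue, hm]
    have step2 : glue e h2 (e.symm (h1 (e m))) = e.symm (h2 (e (e.symm (h1 (e m))))) := by
      simp [glue, h1mem]
    rw [step1, step2, e.right_inv (by rw [he]; trivial), hcomp, e.left_inv hm]
  · simp [glue, hm]

theorem glue_continuous [T2Space M] (e : OpenPartialHomeomorph M E) (he : e.target = univ)
    (h : E → E) (hc : Continuous h) (K : Set E) (hK : IsCompact K)
    (hid : ∀ v ∉ K, h v = v) : Continuous (glue e h) := by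
  have hsymc : Continuous e.symm := by
    have h0 := e.continuousOn_symm
    rw [he] at h0
    exact continuousOn_univ.mp h0
  rw [continuous_iff_continuousAt]
  intro m
  by_cases hm : m ∈ e.source
  · have hca : ContinuousAt (fun m => e.symm (h (e m))) m :=
      hsymc.continuousAt.comp (hc.continuousAt.comp (e.continuousAt hm))
    refine hca.congr ?_
    filter_upwards [e.open_source.mem_nhds hm] with m' hm'
    simp [glue, hm']
  · have hCs : e.symm '' K ⊆ e.source := by
      rw [← e.symm_image_target_eq_source, he]
      exact image_mono (subset_univ K)
    have hCcl : IsClosed (e.symm '' K) := (hK.image hsymc).isClosed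
    have hmC : m ∉ e.symm '' K := fun hmm => hm (hCs hmm)
    refine continuousAt_id.congr ?_
    filter_upwards [hCcl.isOpen_compl.mem_nhds hmC] with m' hm'
    by_cases hm'' : m' ∈ e.source
    · have hkm : e m' ∉ K := fun hk => hm' ⟨e m', hk, e.left_inv hm''⟩
      simp [glue, hm'', hid _ hkm, e.left_inv hm'']
    · simp [glue, hm'']

/-- Given a full chart `e` and two points in its source, there is a global homeomorphism of `M`
which is the identity outside the chart and moves one point to the other. -/
theorem exists_global_homeo [ProperSpace E] [T2Space M]
    (e : OpenPartialHomeomorph M E) (he : e.target = univ) {z y : M}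
    (hz : z ∈ e.source) (hy : y ∈ e.source) :
    ∃ g : M ≃ₜ M, (∀ m ∉ e.source, g m = m) ∧ g z = y := by
  obtain ⟨h, K, hid, hab, hKeq⟩ := exists_homeomorph_id_outside (e z) (e y)
  have hKcomp : IsCompact K := by rw [hKeq]; exact isCompact_closedBall _ _
  have hid' := symm_id_outside_aux h K hid
  refine ⟨⟨⟨glue e h, glue e h.symm,
    fun m => glue_comp e he (⇑h) (⇑h.symm) (fun u => h.symm_apply_apply u) m,
    fun m => glue_comp e he (⇑h.symm) (⇑h) (fun u => h.apply_symm_apply u) m⟩,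
    glue_continuous e he (⇑h) h.continuous K hKcomp hid,
    glue_continuous e he (⇑h.symm) h.symm.continuous K hKcomp hid'⟩, ?_, ?_⟩
  · intro m hm
    show glue e h m = m
    simp [glue, hm]
  · show glue e h z = y
    simp only [glue, if_pos hz]
    rw [hab, e.left_inv hy]

end Aux

/-- Let `M` be a connected topological `n`-manifold without boundary. Then any two points
`x, y ∈ M` lie in a common chart: there is an open set `U ⊆ M` containing both `x` and `y`
which is homeomorphic to `ℝⁿ`. -/
theorem exists_chart_containing_two_points (n : ℕ)
    (M : Type*) [TopologicalSpace M] [T2Space M] [SecondCountableTopology M]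
    [ChartedSpace (EuclideanSpace ℝ (Fin n)) M] [ConnectedSpace M] (x y : M) :
    ∃ U : Set M, IsOpen U ∧ x ∈ U ∧ y ∈ U ∧
      Nonempty (↥U ≃ₜ EuclideanSpace ℝ (Fin n)) := by
  classical
  set S : Set M := {p | ∃ U : Set M, IsOpen U ∧ x ∈ U ∧ p ∈ U ∧
    Nonempty (↥U ≃ₜ EuclideanSpace ℝ (Fin n))} with hS
  have hmemS : ∀ (e : OpenPartialHomeomorph M (EuclideanSpace ℝ (Fin n))), e.target = Set.univ →
      x ∈ e.source → ∀ p ∈ e.source, p ∈ S :=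
    fun e he hx p hp => ⟨e.source, e.open_source, hx, hp, ⟨fullChartHomeomorph e he⟩⟩
  have hxS : x ∈ S := by
    obtain ⟨e, hx, he⟩ := exists_fullChart (E := EuclideanSpace ℝ (Fin n)) x
    exact hmemS e he hx x hx
  have hopen : IsOpen S := by
    rw [isOpen_iff_forall_mem_open]
    rintro p ⟨U, hU, hxU, hpU, hhom⟩
    exact ⟨U, fun q hq => ⟨U, hU, hxU, hq, hhom⟩, hU, hpU⟩
  have hclosed : IsClosed S := by
    refine isClosed_of_closure_subset ?_
    intro p hp
    obtain ⟨e, hpe, he⟩ := exists_fullChart (E := EuclideanSpace ℝ (Fin n)) p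
    by_cases hx' : x ∈ e.source
    · exact hmemS e he hx' p hpe
    · obtain ⟨z, hzB, hzS⟩ := mem_closure_iff.mp hp e.source e.open_source hpe
      obtain ⟨U, hU, hxU, hzU, ⟨ψ⟩⟩ := hzS
      obtain ⟨g, hgid, hgz⟩ := exists_global_homeo e he hzB hpe
      refine ⟨g '' U, (Homeomorph.isOpen_image g).mpr hU, ?_, ⟨z, hzU, hgz⟩,
        ⟨(g.image U).symm.trans ψ⟩⟩
      exact ⟨x, hxU, hgid x hx'⟩
  have hSuniv : S = Set.univ := (isClopen_iff (s := S)).mp ⟨hclosed, hopen⟩ |>.resolve_left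
    (by intro h; rw [h] at hxS; exact hxS)
  have hy : y ∈ S := hSuniv ▸ Set.mem_univ y
  exact hy
end

section
/- Alexander trick, part 1. Let n ≥ 1. Every self-homeomorphism h of the sphere Sⁿ⁻¹ extends to a self-homeomorphism H of the closed disc Dⁿ that sends 0 to 0; that is, there exists a homeomorphism H : Dⁿ ≃ₜ Dⁿ with H(0) = 0 and H(x) = h(x) for every x ∈ Sⁿ⁻¹. -/
namespace AlexanderTrickAux

variable {n : ℕ}

local notation "E" => EuclideanSpace ℝ (Fin n)

theorem mem_sph {x : EuclideanSpace ℝ (Fin n)} (hx : x ≠ 0) :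
    ‖x‖⁻¹ • x ∈ Metric.sphere (0 : EuclideanSpace ℝ (Fin n)) 1 := by
  rw [mem_sphere_zero_iff_norm, norm_smul, norm_inv, norm_norm,
    inv_mul_cancel₀ (norm_ne_zero_iff.mpr hx)]

noncomputable def aext
    (f : ↥(Metric.sphere (0 : EuclideanSpace ℝ (Fin n)) 1) →
      ↥(Metric.sphere (0 : EuclideanSpace ℝ (Fin n)) 1))
    (x : EuclideanSpace ℝ (Fin n)) : EuclideanSpace ℝ (Fin n) :=
  have := Classical.dec
  if hx : x = 0 then 0 else ‖x‖ • (f ⟨‖x‖⁻¹ • x, mem_sph hx⟩ : EuclideanSpace ℝ (Fin n))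

theorem aext_zero (f) : aext (n := n) f 0 = 0 := by simp [aext]

theorem aext_ne (f) {x : EuclideanSpace ℝ (Fin n)} (hx : x ≠ 0) :
    aext f x = ‖x‖ • (f ⟨‖x‖⁻¹ • x, mem_sph hx⟩ : EuclideanSpace ℝ (Fin n)) := by
  simp [aext, hx]

theorem aext_norm (f) (x : EuclideanSpace ℝ (Fin n)) : ‖aext f x‖ = ‖x‖ := by
  by_cases hx : x = 0
  · simp [hx, aext_zero]
  · rw [aext_ne f hx, norm_smul, norm_norm,
      mem_sphere_zero_iff_norm.mp (f ⟨‖x‖⁻¹ • x, mem_sph hx⟩).2, mul_one]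

theorem aext_sphere (f) (x : ↥(Metric.sphere (0 : EuclideanSpace ℝ (Fin n)) 1)) :
    aext f (x : EuclideanSpace ℝ (Fin n)) = (f x : EuclideanSpace ℝ (Fin n)) := by
  have hn : ‖(x : EuclideanSpace ℝ (Fin n))‖ = 1 := mem_sphere_zero_iff_norm.mp x.2
  have hx : (x : EuclideanSpace ℝ (Fin n)) ≠ 0 := by
    intro h0; rw [h0, norm_zero] at hn; norm_num at hn
  rw [aext_ne f hx]
  have : (⟨‖(x:EuclideanSpace ℝ (Fin n))‖⁻¹ • x, mem_sph hx⟩ :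
      ↥(Metric.sphere (0 : EuclideanSpace ℝ (Fin n)) 1)) = x := by
    apply Subtype.ext; simp [hn]
  rw [this, hn, one_smul]

theorem aext_comp (f g) (hfg : ∀ u, g (f u) = u) (x : EuclideanSpace ℝ (Fin n)) :
    aext g (aext f x) = x := by
  by_cases hx : x = 0
  · simp [hx, aext_zero]
  · have hy : aext f x ≠ 0 := by
      rw [← norm_ne_zero_iff, aext_norm]; exact norm_ne_zero_iff.mpr hx
    rw [aext_ne g hy]
    have hnorm : ‖aext f x‖ = ‖x‖ := aext_norm f x
    set u : ↥(Metric.sphere (0 : EuclideanSpace ℝ (Fin n)) 1) := ⟨‖x‖⁻¹ • x, mem_sph hx⟩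
    have hval : aext f x = ‖x‖ • (f u : EuclideanSpace ℝ (Fin n)) := aext_ne f hx
    have hsub : (⟨‖aext f x‖⁻¹ • aext f x, mem_sph hy⟩ :
        ↥(Metric.sphere (0 : EuclideanSpace ℝ (Fin n)) 1)) = f u := by
      apply Subtype.ext
      show ‖aext f x‖⁻¹ • aext f x = ((f u : EuclideanSpace ℝ (Fin n)))
      rw [hnorm, hval, smul_smul, inv_mul_cancel₀ (norm_ne_zero_iff.mpr hx), one_smul]
    rw [hsub, hnorm, hfg, show ((u : EuclideanSpace ℝ (Fin n))) = ‖x‖⁻¹ • x from rfl,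
      smul_smul, mul_inv_cancel₀ (norm_ne_zero_iff.mpr hx), one_smul]

theorem aext_continuous (f) (hf : Continuous f) :
    Continuous (aext (n := n) f) := by
  rw [continuous_iff_continuousAt]
  intro x
  by_cases hx : x = 0
  · subst hx
    rw [ContinuousAt, aext_zero]
    exact squeeze_zero_norm (fun y => le_of_eq (aext_norm f y)) tendsto_norm_zero
  · have hopen : IsOpen ({0}ᶜ : Set (EuclideanSpace ℝ (Fin n))) := isOpen_compl_singleton
    refine ContinuousOn.continuousAt ?_ (hopen.mem_nhds hx)
    rw [continuousOn_iff_continuous_restrict]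
    have : ({0}ᶜ : Set (EuclideanSpace ℝ (Fin n))).domRestrict (aext f) =
        fun y : ↥({0}ᶜ : Set (EuclideanSpace ℝ (Fin n))) =>
          ‖(y : EuclideanSpace ℝ (Fin n))‖ •
            (f ⟨‖(y : EuclideanSpace ℝ (Fin n))‖⁻¹ • y, mem_sph y.2⟩ :
              EuclideanSpace ℝ (Fin n)) := by
      funext y
      exact aext_ne f y.2
    rw [this]
    have hv : Continuous fun y : ↥({0}ᶜ : Set (EuclideanSpace ℝ (Fin n))) =>
        (y : EuclideanSpace ℝ (Fin n)) := continuous_subtype_val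
    have hninv : Continuous fun y : ↥({0}ᶜ : Set (EuclideanSpace ℝ (Fin n))) =>
        ‖(y : EuclideanSpace ℝ (Fin n))‖⁻¹ :=
      (hv.norm).inv₀ fun y => norm_ne_zero_iff.mpr y.2
    exact (hv.norm).smul
      (continuous_subtype_val.comp (hf.comp ((hninv.smul hv).subtype_mk _)))

end AlexanderTrickAux

open AlexanderTrickAux in
/-- **Alexander trick, part 1.** Let `n ≥ 1`. Every self-homeomorphism `h` of the sphere
`Sⁿ⁻¹` extends to a self-homeomorphism `H` of the closed disc `Dⁿ` sending `0` to `0`: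
there is a homeomorphism `H : Dⁿ ≃ₜ Dⁿ` with `H 0 = 0` and `H x = h x` for all `x ∈ Sⁿ⁻¹`. -/
theorem alexander_trick_extension (n : ℕ) [NeZero n]
    (h : ↥(Metric.sphere (0 : EuclideanSpace ℝ (Fin n)) 1) ≃ₜ
      ↥(Metric.sphere (0 : EuclideanSpace ℝ (Fin n)) 1)) :
    ∃ H : ↥(Metric.closedBall (0 : EuclideanSpace ℝ (Fin n)) 1) ≃ₜ
        ↥(Metric.closedBall (0 : EuclideanSpace ℝ (Fin n)) 1),
      (H ⟨0, Metric.mem_closedBall_self zero_le_one⟩ : EuclideanSpace ℝ (Fin n)) = 0 ∧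
      ∀ x : ↥(Metric.sphere (0 : EuclideanSpace ℝ (Fin n)) 1),
        (H ⟨(x : EuclideanSpace ℝ (Fin n)), Metric.sphere_subset_closedBall x.2⟩ :
            EuclideanSpace ℝ (Fin n)) =
          (h x : EuclideanSpace ℝ (Fin n)) := by
  have maps : ∀ (f : ↥(Metric.sphere (0 : EuclideanSpace ℝ (Fin n)) 1) →
      ↥(Metric.sphere (0 : EuclideanSpace ℝ (Fin n)) 1))
      (x : ↥(Metric.closedBall (0 : EuclideanSpace ℝ (Fin n)) 1)),
      aext f (x : EuclideanSpace ℝ (Fin n)) ∈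
        Metric.closedBall (0 : EuclideanSpace ℝ (Fin n)) 1 := by
    intro f x
    rw [Metric.mem_closedBall, dist_zero_right, aext_norm]
    rw [← dist_zero_right]
    exact x.2
  refine ⟨{
    toFun := fun x => ⟨aext h x, maps h x⟩
    invFun := fun x => ⟨aext h.symm x, maps h.symm x⟩
    left_inv := fun x => Subtype.ext (aext_comp h h.symm h.symm_apply_apply x)
    right_inv := fun x => Subtype.ext (aext_comp h.symm h h.apply_symm_apply x)
    continuous_toFun :=
      ((aext_continuous h h.continuous).comp continuous_subtype_val).subtype_mk _
    continuous_invFun :=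
      ((aext_continuous h.symm h.symm.continuous).comp continuous_subtype_val).subtype_mk _
  }, ?_, ?_⟩
  · exact aext_zero h
  · intro x
    exact aext_sphere h x
end

section
/- Alexander trick, part 2. Let n ≥ 1 and let f, g be self-homeomorphisms of the closed disc Dⁿ that map the boundary sphere Sⁿ⁻¹ onto itself. If the induced self-homeomorphisms of Sⁿ⁻¹ (the restrictions of f and g) are isotopic, then f and g are isotopic as self-homeomorphisms of Dⁿ. -/
/-- Two self-homeomorphisms `f, g` of a topological space `X` are *isotopic* if there is a
continuous `H : X × [0,1] → X` with `H (·, 0) = f`, `H (·, 1) = g`, and every level `H (·, t)`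
bijective. -/
def HomeoIsotopic {X : Type*} [TopologicalSpace X] (f g : X ≃ₜ X) : Prop :=
  ∃ H : X × ↥(Set.Icc (0 : ℝ) 1) → X,
    Continuous H ∧
    (∀ x, H (x, ⟨0, Set.left_mem_Icc.mpr zero_le_one⟩) = f x) ∧
    (∀ x, H (x, ⟨1, Set.right_mem_Icc.mpr zero_le_one⟩) = g x) ∧
    ∀ t : ↥(Set.Icc (0 : ℝ) 1), Function.Bijective fun x => H (x, t)


open Metric Set

section AlexanderAux

variable {E : Type*} [NormedAddCommGroup E] [NormedSpace ℝ E]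

noncomputable def bfun (t : ℝ) : ℝ := max 0 (max (1 - 3*t) (3*t - 2))

noncomputable def sfun (t : ℝ) : ℝ := max 0 (min 1 (3*t - 1))

lemma bfun_nonneg (t : ℝ) : 0 ≤ bfun t := le_max_left _ _

lemma bfun_zero : bfun (0:ℝ) = 1 := by norm_num [bfun]

lemma bfun_one : bfun (1:ℝ) = 1 := by norm_num [bfun]

lemma bfun_le_one {t : ℝ} (h0 : 0 ≤ t) (h1 : t ≤ 1) : bfun t ≤ 1 := by
  unfold bfun
  apply max_le (by norm_num)
  apply max_le <;> linarith

lemma continuous_bfun : Continuous bfun := by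
  unfold bfun; fun_prop

lemma continuous_sfun : Continuous sfun := by
  unfold sfun; fun_prop

lemma sfun_mem (t : ℝ) : sfun t ∈ Icc (0:ℝ) 1 := by
  constructor
  · exact le_max_left _ _
  · exact max_le (by norm_num) (min_le_left _ _)

lemma sfun_eq_zero {t : ℝ} (h : t ≤ 1/3) : sfun t = 0 := by
  unfold sfun
  rw [max_eq_left]
  exact le_trans (min_le_right _ _) (by linarith)

lemma sfun_eq_one {t : ℝ} (h : 2/3 ≤ t) : sfun t = 1 := by
  unfold sfun
  rw [min_eq_left (by linarith), max_eq_right (by norm_num)]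

lemma bfun_pos_cases {t : ℝ} (h : 0 < bfun t) : t < 1/3 ∨ 2/3 < t := by
  by_contra hc
  push_neg at hc
  have : bfun t = 0 := by
    unfold bfun
    rw [max_eq_left]
    apply max_le <;> linarith [hc.1, hc.2]
  linarith

lemma bfun_eq_left {t : ℝ} (h : t < 1/3) : bfun t = 1 - 3*t := by
  unfold bfun
  rw [max_eq_left (show (3*t-2:ℝ) ≤ 1 - 3*t by linarith), max_eq_right (by linarith)]

noncomputable def projBall (y : E) : ↥(Metric.closedBall (0:E) 1) :=
  ⟨(max 1 ‖y‖)⁻¹ • y, by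
    have h1 : (0:ℝ) < max 1 ‖y‖ := lt_of_lt_of_le one_pos (le_max_left _ _)
    rw [mem_closedBall_zero_iff, norm_smul, norm_inv, Real.norm_eq_abs,
      abs_of_pos h1]
    rw [inv_mul_le_one₀ h1]
    exact le_max_right _ _⟩

lemma continuous_projBall : Continuous (projBall : E → _) := by
  apply Continuous.subtype_mk
  fun_prop (disch := intro y; positivity)

lemma projBall_coe {y : E} (h : ‖y‖ ≤ 1) : (projBall y : E) = y := by
  simp [projBall, max_eq_left h]

lemma projBall_eq {y : E} (h : ‖y‖ ≤ 1) : projBall y = ⟨y, mem_closedBall_zero_iff.mpr h⟩ :=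
  Subtype.ext (projBall_coe h)

end AlexanderAux

section AlexanderCore

variable {E : Type*} [NormedAddCommGroup E] [NormedSpace ℝ E]

noncomputable def alexInner
    (f g : ↥(Metric.closedBall (0:E) 1) ≃ₜ ↥(Metric.closedBall (0:E) 1)) (p : E × ℝ) : E :=
  bfun p.2 • (((if p.2 ≤ 1/2 then f else g) (projBall ((bfun p.2)⁻¹ • p.1))) : E)

lemma norm_alexInner_le (f g : ↥(Metric.closedBall (0:E) 1) ≃ₜ ↥(Metric.closedBall (0:E) 1))
    (p : E × ℝ) : ‖alexInner f g p‖ ≤ bfun p.2 := by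
  unfold alexInner
  rw [norm_smul, Real.norm_eq_abs, abs_of_nonneg (bfun_nonneg _)]
  have h1 : ‖(((if p.2 ≤ 1/2 then f else g) (projBall ((bfun p.2)⁻¹ • p.1))) : E)‖ ≤ 1 :=
    mem_closedBall_zero_iff.mp (Subtype.mem _)
  nlinarith [bfun_nonneg p.2, norm_nonneg (((if p.2 ≤ 1/2 then f else g) (projBall ((bfun p.2)⁻¹ • p.1))) : E)]

lemma continuousAt_alexInner_aux (h : ↥(Metric.closedBall (0:E) 1) ≃ₜ ↥(Metric.closedBall (0:E) 1))
    {p : E × ℝ} (hb : bfun p.2 ≠ 0) :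
    ContinuousAt (fun q : E × ℝ => bfun q.2 • ((h (projBall ((bfun q.2)⁻¹ • q.1))) : E)) p := by
  have hbc : ContinuousAt (fun q : E × ℝ => bfun q.2) p :=
    (continuous_bfun.comp continuous_snd).continuousAt
  have hb' : ContinuousAt (fun q : E × ℝ => (bfun q.2)⁻¹ • q.1) p :=
    (hbc.inv₀ hb).smul continuous_fst.continuousAt
  exact hbc.smul (continuous_subtype_val.continuousAt.comp
    ((h.continuous.comp continuous_projBall).continuousAt.comp hb'))

lemma continuous_alexInner (f g : ↥(Metric.closedBall (0:E) 1) ≃ₜ ↥(Metric.closedBall (0:E) 1)) :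
    Continuous (alexInner f g) := by
  rw [continuous_iff_continuousAt]
  intro p
  rcases eq_or_lt_of_le (bfun_nonneg p.2) with h0 | hpos
  · have hval : alexInner f g p = 0 := by unfold alexInner; rw [← h0, zero_smul]
    unfold ContinuousAt
    rw [hval]
    apply squeeze_zero_norm (norm_alexInner_le f g)
    have ht : Filter.Tendsto (fun q : E × ℝ => bfun q.2) (nhds p) (nhds (bfun p.2)) :=
      (continuous_bfun.comp continuous_snd).continuousAt
    rwa [← h0] at ht
  · rcases bfun_pos_cases hpos with hlt | hgt
    · apply (continuousAt_alexInner_aux f hpos.ne').congr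
      have hmem : {q : E × ℝ | q.2 < 1/2} ∈ nhds p :=
        (isOpen_lt continuous_snd continuous_const).mem_nhds (by show p.2 < 1/2; linarith)
      filter_upwards [hmem] with q hq
      unfold alexInner
      rw [if_pos (le_of_lt hq)]
    · apply (continuousAt_alexInner_aux g hpos.ne').congr
      have hmem : {q : E × ℝ | 1/2 < q.2} ∈ nhds p :=
        (isOpen_lt continuous_const continuous_snd).mem_nhds (by show 1/2 < p.2; linarith)
      filter_upwards [hmem] with q hq
      unfold alexInner
      rw [if_neg (not_le.mpr hq)]

noncomputable def alexOuter
    (H' : ↥(Metric.sphere (0:E) 1) × ↥(Set.Icc (0:ℝ) 1) → ↥(Metric.sphere (0:E) 1))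
    (p : E × ℝ) : E :=
  if h : ‖p.1‖ = 0 then 0
  else ‖p.1‖ • (H' (⟨‖p.1‖⁻¹ • p.1, by
      rw [mem_sphere_zero_iff_norm, norm_smul, norm_inv, norm_norm, inv_mul_cancel₀ h]⟩,
    ⟨sfun p.2, sfun_mem _⟩) : E)

lemma norm_alexOuter_eq
    (H' : ↥(Metric.sphere (0:E) 1) × ↥(Set.Icc (0:ℝ) 1) → ↥(Metric.sphere (0:E) 1))
    {p : E × ℝ} (h : p.1 ≠ 0) : ‖alexOuter H' p‖ = ‖p.1‖ := by
  unfold alexOuter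
  rw [dif_neg (norm_ne_zero_iff.mpr h), norm_smul, Real.norm_eq_abs, abs_of_nonneg (norm_nonneg _),
    mem_sphere_zero_iff_norm.mp (Subtype.mem _), mul_one]

lemma norm_alexOuter_le
    (H' : ↥(Metric.sphere (0:E) 1) × ↥(Set.Icc (0:ℝ) 1) → ↥(Metric.sphere (0:E) 1))
    (p : E × ℝ) : ‖alexOuter H' p‖ ≤ ‖p.1‖ := by
  rcases eq_or_ne p.1 0 with h | h
  · unfold alexOuter
    rw [dif_pos (by rw [h, norm_zero])]
    simp
  · exact le_of_eq (norm_alexOuter_eq H' h)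

lemma continuous_alexOuter
    {H' : ↥(Metric.sphere (0:E) 1) × ↥(Set.Icc (0:ℝ) 1) → ↥(Metric.sphere (0:E) 1)}
    (hH' : Continuous H') : Continuous (alexOuter H') := by
  rw [continuous_iff_continuousAt]
  intro p
  rcases eq_or_ne p.1 0 with h0 | hne
  · have hval : alexOuter H' p = 0 := by
      unfold alexOuter; rw [dif_pos (by rw [h0, norm_zero])]
    unfold ContinuousAt
    rw [hval]
    apply squeeze_zero_norm (norm_alexOuter_le H')
    have ht : Filter.Tendsto (fun q : E × ℝ => ‖q.1‖) (nhds p) (nhds ‖p.1‖) :=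
      (continuous_norm.comp continuous_fst).continuousAt
    rwa [h0, norm_zero] at ht
  · have hopen : IsOpen {q : E × ℝ | q.1 ≠ 0} := isOpen_compl_singleton.preimage continuous_fst
    apply ContinuousOn.continuousAt _ (hopen.mem_nhds hne)
    rw [continuousOn_iff_continuous_restrict]
    have heq : Set.restrict {q : E × ℝ | q.1 ≠ 0} (alexOuter H')
        = fun q : ↥{q : E × ℝ | q.1 ≠ 0} => ‖q.1.1‖ • (H' (⟨‖q.1.1‖⁻¹ • q.1.1, by
            rw [mem_sphere_zero_iff_norm, norm_smul, norm_inv, norm_norm,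
              inv_mul_cancel₀ (norm_ne_zero_iff.mpr q.2)]⟩,
          ⟨sfun q.1.2, sfun_mem _⟩) : E) := by
      funext q
      exact dif_neg (norm_ne_zero_iff.mpr q.2)
    rw [show Set.domRestrict {q : E × ℝ | q.1 ≠ 0} (alexOuter H') = _ from heq]
    have hnorm : Continuous fun q : ↥{q : E × ℝ | q.1 ≠ 0} => ‖q.1.1‖ :=
      continuous_norm.comp (continuous_fst.comp continuous_subtype_val)
    apply hnorm.smul
    apply continuous_subtype_val.comp
    apply hH'.comp
    apply Continuous.prodMk
    · apply Continuous.subtype_mk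
      exact (hnorm.inv₀ fun q => norm_ne_zero_iff.mpr q.2).smul
        (continuous_fst.comp continuous_subtype_val)
    · exact Continuous.subtype_mk (continuous_sfun.comp
        (continuous_snd.comp continuous_subtype_val)) _

end AlexanderCore

section AlexanderMatch

variable {E : Type*} [NormedAddCommGroup E] [NormedSpace ℝ E]
variable (f g : ↥(Metric.closedBall (0:E) 1) ≃ₜ ↥(Metric.closedBall (0:E) 1))
variable (f' g' : ↥(Metric.sphere (0:E) 1) ≃ₜ ↥(Metric.sphere (0:E) 1))
variable (H' : ↥(Metric.sphere (0:E) 1) × ↥(Set.Icc (0:ℝ) 1) → ↥(Metric.sphere (0:E) 1))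

lemma alex_match
    (hf' : ∀ x : ↥(Metric.sphere (0:E) 1),
      (f' x : E) = (f ⟨(x : E), Metric.sphere_subset_closedBall x.2⟩ : E))
    (hg' : ∀ x : ↥(Metric.sphere (0:E) 1),
      (g' x : E) = (g ⟨(x : E), Metric.sphere_subset_closedBall x.2⟩ : E))
    (H'0 : ∀ x, H' (x, ⟨0, Set.left_mem_Icc.mpr zero_le_one⟩) = f' x)
    (H'1 : ∀ x, H' (x, ⟨1, Set.right_mem_Icc.mpr zero_le_one⟩) = g' x)
    {x : E} {t : ℝ} (hb : ‖x‖ = bfun t) :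
    alexInner f g (x, t) = alexOuter H' (x, t) := by
  rcases eq_or_lt_of_le (bfun_nonneg t) with h0 | hpos
  · have hx0 : ‖x‖ = 0 := by rw [hb, ← h0]
    unfold alexInner alexOuter
    rw [dif_pos (by simpa using hx0)]
    simp only [Prod.snd]
    rw [show bfun (x, t).2 = 0 by simpa using h0.symm, zero_smul]
  · have hxne : x ≠ 0 := by
      intro h
      rw [h, norm_zero] at hb
      exact hpos.ne hb
    have hni : ‖(bfun t)⁻¹ • x‖ = 1 := by
      rw [norm_smul, norm_inv, Real.norm_eq_abs, abs_of_pos hpos, hb,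
        inv_mul_cancel₀ hpos.ne']
    have hS : (bfun t)⁻¹ • x ∈ Metric.sphere (0:E) 1 := mem_sphere_zero_iff_norm.mpr hni
    have hS' : ‖x‖⁻¹ • x ∈ Metric.sphere (0:E) 1 := by
      rw [hb]; exact hS
    have hw : (⟨‖x‖⁻¹ • x, hS'⟩ : ↥(Metric.sphere (0:E) 1)) = ⟨(bfun t)⁻¹ • x, hS⟩ :=
      Subtype.ext (show ‖x‖⁻¹ • x = (bfun t)⁻¹ • x by rw [hb])
    have hpb : projBall ((bfun t)⁻¹ • x)
        = ⟨(bfun t)⁻¹ • x, Metric.sphere_subset_closedBall hS⟩ :=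
      Subtype.ext (projBall_coe hni.le)
    unfold alexInner alexOuter
    rw [dif_neg (by simp only [Prod.fst]; exact norm_ne_zero_iff.mpr hxne)]
    simp only [Prod.fst, Prod.snd]
    rcases bfun_pos_cases hpos with hlt | hgt
    · have hs : (⟨sfun t, sfun_mem t⟩ : ↥(Set.Icc (0:ℝ) 1))
          = ⟨0, Set.left_mem_Icc.mpr zero_le_one⟩ := Subtype.ext (sfun_eq_zero hlt.le)
      rw [if_pos (show t ≤ 1/2 by linarith), hw, hs, H'0, hb, hpb, hf']
    · have hs : (⟨sfun t, sfun_mem t⟩ : ↥(Set.Icc (0:ℝ) 1))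
          = ⟨1, Set.right_mem_Icc.mpr zero_le_one⟩ := Subtype.ext (sfun_eq_one hgt.le)
      rw [if_neg (show ¬ t ≤ 1/2 by push_neg; linarith), hw, hs, H'1, hb, hpb, hg']

end AlexanderMatch

section AlexanderKey

variable {E : Type*} [NormedAddCommGroup E] [NormedSpace ℝ E]

noncomputable def alexRaw
    (f g : ↥(Metric.closedBall (0:E) 1) ≃ₜ ↥(Metric.closedBall (0:E) 1))
    (H' : ↥(Metric.sphere (0:E) 1) × ↥(Set.Icc (0:ℝ) 1) → ↥(Metric.sphere (0:E) 1))
    (p : E × ℝ) : E :=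
  if ‖p.1‖ ≤ bfun p.2 then alexInner f g p else alexOuter H' p

variable (f g : ↥(Metric.closedBall (0:E) 1) ≃ₜ ↥(Metric.closedBall (0:E) 1))
variable (H' : ↥(Metric.sphere (0:E) 1) × ↥(Set.Icc (0:ℝ) 1) → ↥(Metric.sphere (0:E) 1))

lemma alexRaw_mem {x : E} (hx : ‖x‖ ≤ 1) {t : ℝ} (h0 : 0 ≤ t) (h1 : t ≤ 1) :
    alexRaw f g H' (x, t) ∈ Metric.closedBall (0:E) 1 := by
  rw [mem_closedBall_zero_iff]
  unfold alexRaw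
  split_ifs with hc
  · exact le_trans (norm_alexInner_le f g _) (bfun_le_one h0 h1)
  · exact le_trans (norm_alexOuter_le H' _) hx

lemma alexRaw_zero (x : ↥(Metric.closedBall (0:E) 1)) :
    alexRaw f g H' ((x : E), 0) = (f x : E) := by
  have hx : ‖(x : E)‖ ≤ 1 := mem_closedBall_zero_iff.mp x.2
  unfold alexRaw alexInner
  simp only [Prod.fst, Prod.snd]
  rw [if_pos (by rw [bfun_zero]; exact hx), if_pos (by norm_num : (0:ℝ) ≤ 1/2),
    bfun_zero, inv_one, one_smul, one_smul, Subtype.ext (projBall_coe hx : (projBall (x:E) : E) = x)]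

lemma alexRaw_one (x : ↥(Metric.closedBall (0:E) 1)) :
    alexRaw f g H' ((x : E), 1) = (g x : E) := by
  have hx : ‖(x : E)‖ ≤ 1 := mem_closedBall_zero_iff.mp x.2
  unfold alexRaw alexInner
  simp only [Prod.fst, Prod.snd]
  rw [if_pos (by rw [bfun_one]; exact hx), if_neg (by norm_num : ¬ (1:ℝ) ≤ 1/2),
    bfun_one, inv_one, one_smul, one_smul, Subtype.ext (projBall_coe hx : (projBall (x:E) : E) = x)]

end AlexanderKey

section AlexanderFinal

variable {E : Type*} [NormedAddCommGroup E] [NormedSpace ℝ E]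

theorem alex_key
    (f g : ↥(Metric.closedBall (0:E) 1) ≃ₜ ↥(Metric.closedBall (0:E) 1))
    (f' g' : ↥(Metric.sphere (0:E) 1) ≃ₜ ↥(Metric.sphere (0:E) 1))
    (hf' : ∀ x : ↥(Metric.sphere (0:E) 1),
      (f' x : E) = (f ⟨(x : E), Metric.sphere_subset_closedBall x.2⟩ : E))
    (hg' : ∀ x : ↥(Metric.sphere (0:E) 1),
      (g' x : E) = (g ⟨(x : E), Metric.sphere_subset_closedBall x.2⟩ : E))
    (hiso : HomeoIsotopic f' g') : HomeoIsotopic f g := by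
  obtain ⟨H', H'c, H'0, H'1, H'bij⟩ := hiso
  refine ⟨fun p => ⟨alexRaw f g H' ((p.1 : E), (p.2 : ℝ)),
      alexRaw_mem f g H' (mem_closedBall_zero_iff.mp p.1.2) p.2.2.1 p.2.2.2⟩, ?_, ?_, ?_, ?_⟩
  · apply Continuous.subtype_mk
    have hcont : Continuous (alexRaw f g H') := by
      unfold alexRaw
      refine Continuous.if_le (continuous_alexInner f g) (continuous_alexOuter H'c)
        (continuous_norm.comp continuous_fst) (continuous_bfun.comp continuous_snd) ?_
      intro p hp
      exact alex_match f g f' g' H' hf' hg' H'0 H'1 hp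
    exact hcont.comp ((continuous_subtype_val.comp continuous_fst).prodMk
      (continuous_subtype_val.comp continuous_snd))
  · intro x; exact Subtype.ext (alexRaw_zero f g H' x)
  · intro x; exact Subtype.ext (alexRaw_one f g H' x)
  · intro t
    constructor
    · -- injectivity
      intro x₁ x₂ hx
      have h : alexRaw f g H' ((x₁ : E), (t : ℝ)) = alexRaw f g H' ((x₂ : E), (t : ℝ)) :=
        congrArg Subtype.val hx
      by_cases c₁ : ‖(x₁ : E)‖ ≤ bfun (t : ℝ) <;> by_cases c₂ : ‖(x₂ : E)‖ ≤ bfun (t : ℝ)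
      · -- both inner
        rcases eq_or_lt_of_le (bfun_nonneg (t : ℝ)) with h0 | hpos
        · apply Subtype.ext
          have e1 : (x₁ : E) = 0 := norm_le_zero_iff.mp (h0 ▸ c₁)
          have e2 : (x₂ : E) = 0 := norm_le_zero_iff.mp (h0 ▸ c₂)
          rw [e1, e2]
        · unfold alexRaw alexInner at h
          rw [if_pos c₁, if_pos c₂] at h
          have h2 := smul_right_injective E hpos.ne' h
          have h3 := (if (t : ℝ) ≤ 1/2 then f else g).injective (Subtype.ext h2)
          have h5 := congrArg Subtype.val h3
          have hn1 : ‖(bfun (t:ℝ))⁻¹ • (x₁ : E)‖ ≤ 1 := by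
            rw [norm_smul, norm_inv, Real.norm_eq_abs, abs_of_pos hpos,
              inv_mul_le_one₀ hpos]
            exact c₁
          have hn2 : ‖(bfun (t:ℝ))⁻¹ • (x₂ : E)‖ ≤ 1 := by
            rw [norm_smul, norm_inv, Real.norm_eq_abs, abs_of_pos hpos,
              inv_mul_le_one₀ hpos]
            exact c₂
          rw [projBall_coe hn1, projBall_coe hn2] at h5
          exact Subtype.ext (smul_right_injective E (inv_ne_zero hpos.ne') h5)
      · -- inner vs outer
        exfalso
        have hgt : bfun (t:ℝ) < ‖(x₂ : E)‖ := not_le.mp c₂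
        have hx2 : (x₂ : E) ≠ 0 := by
          intro e; rw [e, norm_zero] at hgt; exact absurd hgt (not_lt.mpr (bfun_nonneg _))
        have hn1 : ‖alexRaw f g H' ((x₁ : E), (t:ℝ))‖ ≤ bfun (t:ℝ) := by
          unfold alexRaw; rw [if_pos c₁]; exact norm_alexInner_le f g _
        have hn2 : ‖alexRaw f g H' ((x₂ : E), (t:ℝ))‖ = ‖(x₂ : E)‖ := by
          unfold alexRaw; rw [if_neg c₂]; exact norm_alexOuter_eq H' hx2
        rw [h, hn2] at hn1
        linarith
      · -- outer vs inner
        exfalso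
        have hgt : bfun (t:ℝ) < ‖(x₁ : E)‖ := not_le.mp c₁
        have hx1 : (x₁ : E) ≠ 0 := by
          intro e; rw [e, norm_zero] at hgt; exact absurd hgt (not_lt.mpr (bfun_nonneg _))
        have hn2 : ‖alexRaw f g H' ((x₂ : E), (t:ℝ))‖ ≤ bfun (t:ℝ) := by
          unfold alexRaw; rw [if_pos c₂]; exact norm_alexInner_le f g _
        have hn1 : ‖alexRaw f g H' ((x₁ : E), (t:ℝ))‖ = ‖(x₁ : E)‖ := by
          unfold alexRaw; rw [if_neg c₁]; exact norm_alexOuter_eq H' hx1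
        rw [← h, hn1] at hn2
        linarith
      · -- both outer
        have hgt₁ : bfun (t:ℝ) < ‖(x₁ : E)‖ := not_le.mp c₁
        have hgt₂ : bfun (t:ℝ) < ‖(x₂ : E)‖ := not_le.mp c₂
        have hx1 : (x₁ : E) ≠ 0 := by
          intro e; rw [e, norm_zero] at hgt₁; exact absurd hgt₁ (not_lt.mpr (bfun_nonneg _))
        have hx2 : (x₂ : E) ≠ 0 := by
          intro e; rw [e, norm_zero] at hgt₂; exact absurd hgt₂ (not_lt.mpr (bfun_nonneg _))
        have hn1 : ‖alexRaw f g H' ((x₁ : E), (t:ℝ))‖ = ‖(x₁ : E)‖ := by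
          unfold alexRaw; rw [if_neg c₁]; exact norm_alexOuter_eq H' hx1
        have hn2 : ‖alexRaw f g H' ((x₂ : E), (t:ℝ))‖ = ‖(x₂ : E)‖ := by
          unfold alexRaw; rw [if_neg c₂]; exact norm_alexOuter_eq H' hx2
        have hr : ‖(x₁ : E)‖ = ‖(x₂ : E)‖ := by rw [← hn1, ← hn2, h]
        unfold alexRaw alexOuter at h
        rw [if_neg c₁, if_neg c₂, dif_neg (norm_ne_zero_iff.mpr hx1),
          dif_neg (norm_ne_zero_iff.mpr hx2)] at h
        have hv := congrArg (fun z : E => ‖(x₁ : E)‖⁻¹ • z) h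
        simp only at hv
        rw [inv_smul_smul₀ (norm_ne_zero_iff.mpr hx1), smul_smul,
          show ‖(x₁:E)‖⁻¹ * ‖(x₂:E)‖ = 1 by
            rw [hr]; exact inv_mul_cancel₀ (norm_ne_zero_iff.mpr hx2),
          one_smul] at hv
        have h4 := (H'bij ⟨sfun (t:ℝ), sfun_mem _⟩).1 (Subtype.ext hv)
        have h5 := congrArg Subtype.val h4
        simp only at h5
        rw [hr] at h5
        exact Subtype.ext (smul_right_injective E (inv_ne_zero (norm_ne_zero_iff.mpr hx2)) h5)
    · -- surjectivity
      intro y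
      by_cases hy : ‖(y : E)‖ ≤ bfun (t : ℝ)
      · rcases eq_or_lt_of_le (bfun_nonneg (t : ℝ)) with h0 | hpos
        · have hy0 : (y : E) = 0 := norm_le_zero_iff.mp (h0 ▸ hy)
          refine ⟨⟨0, by simp⟩, ?_⟩
          apply Subtype.ext
          show alexRaw f g H' ((0 : E), (t:ℝ)) = (y : E)
          unfold alexRaw alexInner
          rw [if_pos (by rw [norm_zero]; exact bfun_nonneg _)]
          simp only
          rw [← h0, zero_smul, hy0]
        · have hin : ‖(bfun (t:ℝ))⁻¹ • (y : E)‖ ≤ 1 := by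
            rw [norm_smul, norm_inv, Real.norm_eq_abs, abs_of_pos hpos,
              inv_mul_le_one₀ hpos]
            exact hy
          obtain ⟨w, hw⟩ := (if (t:ℝ) ≤ 1/2 then f else g).surjective
            ⟨(bfun (t:ℝ))⁻¹ • (y : E), mem_closedBall_zero_iff.mpr hin⟩
          have hwn : ‖(w : E)‖ ≤ 1 := mem_closedBall_zero_iff.mp w.2
          have hnx : ‖bfun (t:ℝ) • (w : E)‖ ≤ bfun (t:ℝ) := by
            rw [norm_smul, Real.norm_eq_abs, abs_of_pos hpos]
            nlinarith [norm_nonneg (w : E)]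
          refine ⟨⟨bfun (t:ℝ) • (w : E), mem_closedBall_zero_iff.mpr
            (le_trans hnx (bfun_le_one t.2.1 t.2.2))⟩, ?_⟩
          apply Subtype.ext
          show alexRaw f g H' (bfun (t:ℝ) • (w : E), (t:ℝ)) = (y : E)
          unfold alexRaw alexInner
          rw [if_pos hnx]
          simp only
          rw [inv_smul_smul₀ hpos.ne', projBall_eq hwn, Subtype.coe_eta, hw, smul_inv_smul₀ hpos.ne']
      · have hgt : bfun (t:ℝ) < ‖(y : E)‖ := not_le.mp hy
        have hyne : (y : E) ≠ 0 := by
          intro e; rw [e, norm_zero] at hgt; exact absurd hgt (not_lt.mpr (bfun_nonneg _))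
        have hnz : ‖(y : E)‖ ≠ 0 := norm_ne_zero_iff.mpr hyne
        have hu' : ‖(y:E)‖⁻¹ • (y : E) ∈ Metric.sphere (0:E) 1 := by
          rw [mem_sphere_zero_iff_norm, norm_smul, norm_inv, norm_norm, inv_mul_cancel₀ hnz]
        obtain ⟨u, hu⟩ := (H'bij ⟨sfun (t:ℝ), sfun_mem _⟩).2 ⟨‖(y:E)‖⁻¹ • (y : E), hu'⟩
        have hun : ‖(u : E)‖ = 1 := mem_sphere_zero_iff_norm.mp u.2
        have hnorm : ‖‖(y:E)‖ • (u : E)‖ = ‖(y:E)‖ := by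
          rw [norm_smul, hun, mul_one, norm_norm]
        refine ⟨⟨‖(y:E)‖ • (u : E), mem_closedBall_zero_iff.mpr
          (by rw [hnorm]; exact mem_closedBall_zero_iff.mp y.2)⟩, ?_⟩
        apply Subtype.ext
        show alexRaw f g H' (‖(y:E)‖ • (u : E), (t:ℝ)) = (y : E)
        unfold alexRaw alexOuter
        rw [if_neg (by rw [hnorm]; exact hy)]
        rw [dif_neg (by rw [hnorm]; exact hnz)]
        have hXi : (⟨‖‖(y:E)‖ • (u : E)‖⁻¹ • ‖(y:E)‖ • (u : E), by
            rw [mem_sphere_zero_iff_norm, norm_smul, norm_inv, norm_norm,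
              inv_mul_cancel₀ (by rw [hnorm]; exact hnz)]⟩ : ↥(Metric.sphere (0:E) 1)) = u := by
          apply Subtype.ext
          show ‖‖(y:E)‖ • (u : E)‖⁻¹ • ‖(y:E)‖ • (u : E) = (u : E)
          rw [hnorm, inv_smul_smul₀ hnz]
        rw [hXi]
        simp only
        rw [show H' (u, (⟨sfun (t:ℝ), sfun_mem _⟩ : ↥(Set.Icc (0:ℝ) 1)))
            = (⟨‖(y:E)‖⁻¹ • (y:E), hu'⟩ : ↥(Metric.sphere (0:E) 1)) from hu]
        show ‖‖(y:E)‖ • (u : E)‖ • (‖(y:E)‖⁻¹ • (y : E)) = (y : E)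
        rw [hnorm, smul_inv_smul₀ hnz]

end AlexanderFinal

/-- **Alexander trick, part 2.** Let `n ≥ 1` and let `f, g` be self-homeomorphisms of the
closed disc `Dⁿ` mapping the boundary sphere `Sⁿ⁻¹` onto itself. If the induced
self-homeomorphisms `f', g'` of `Sⁿ⁻¹` (the restrictions of `f` and `g`) are isotopic, then
`f` and `g` are isotopic as self-homeomorphisms of `Dⁿ`. -/
theorem alexander_trick_isotopy (n : ℕ) [NeZero n]
    (f g : ↥(Metric.closedBall (0 : EuclideanSpace ℝ (Fin n)) 1) ≃ₜ
      ↥(Metric.closedBall (0 : EuclideanSpace ℝ (Fin n)) 1))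
    (hf : ⇑f '' (Subtype.val ⁻¹' Metric.sphere (0 : EuclideanSpace ℝ (Fin n)) 1) =
      Subtype.val ⁻¹' Metric.sphere (0 : EuclideanSpace ℝ (Fin n)) 1)
    (hg : ⇑g '' (Subtype.val ⁻¹' Metric.sphere (0 : EuclideanSpace ℝ (Fin n)) 1) =
      Subtype.val ⁻¹' Metric.sphere (0 : EuclideanSpace ℝ (Fin n)) 1)
    (f' g' : ↥(Metric.sphere (0 : EuclideanSpace ℝ (Fin n)) 1) ≃ₜ
      ↥(Metric.sphere (0 : EuclideanSpace ℝ (Fin n)) 1))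
    (hf' : ∀ x : ↥(Metric.sphere (0 : EuclideanSpace ℝ (Fin n)) 1),
      (f' x : EuclideanSpace ℝ (Fin n)) =
        (f ⟨(x : EuclideanSpace ℝ (Fin n)), Metric.sphere_subset_closedBall x.2⟩ :
          EuclideanSpace ℝ (Fin n)))
    (hg' : ∀ x : ↥(Metric.sphere (0 : EuclideanSpace ℝ (Fin n)) 1),
      (g' x : EuclideanSpace ℝ (Fin n)) =
        (g ⟨(x : EuclideanSpace ℝ (Fin n)), Metric.sphere_subset_closedBall x.2⟩ :
          EuclideanSpace ℝ (Fin n)))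
    (hiso : HomeoIsotopic f' g') :
    HomeoIsotopic f g :=
  alex_key f g f' g' hf' hg' hiso
end

section
/- A quasi-isomorphism between nonnegatively graded chain complexes of free modules over a group ring is a chain homotopy equivalence: let π be a group, let R = ℤ[π] be its integral group ring, let C and D be ℕ-indexed chain complexes of R-modules such that every term of C and of D is a free R-module, and let f : C ⟶ D be a chain map inducing an isomorphism on homology in every degree. Then f is a chain homotopy equivalence; that is, there exists a chain map g : D ⟶ C together with chain homotopies from f ≫ g to the identity of C and from g ≫ f to the identity of D. -/
open CategoryTheory

universe v u
namespace QIWhitehead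
variable {R : Type u} [Ring R]

lemma homologyMap_isIso_of_iso {S T : ShortComplex (ModuleCat.{v} R)} (α : S ≅ T) :
    IsIso (ShortComplex.homologyMap α.hom) :=
  ⟨ShortComplex.homologyMap α.inv, by
    rw [← ShortComplex.homologyMap_comp, α.hom_inv_id, ShortComplex.homologyMap_id], by
    rw [← ShortComplex.homologyMap_comp, α.inv_hom_id, ShortComplex.homologyMap_id]⟩

lemma chase {S T : ShortComplex (ModuleCat.{v} R)} (φ : S ⟶ T)
    (hφ : IsIso (ShortComplex.homologyMap φ)) :
    (∀ y : T.X₂, T.g y = 0 → ∃ (x : S.X₂) (e : T.X₁), S.g x = 0 ∧ φ.τ₂ x + T.f e = y) ∧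
    (∀ x : S.X₂, S.g x = 0 → (∃ e : T.X₁, φ.τ₂ x = T.f e) → ∃ w : S.X₁, S.f w = x) := by
  classical
  set Hc : S.moduleCatLeftHomologyData.H ⟶ T.moduleCatLeftHomologyData.H :=
    S.moduleCatHomologyIso.inv ≫ ShortComplex.homologyMap φ ≫ T.moduleCatHomologyIso.hom with hHc
  haveI : IsIso Hc := by
    haveI := hφ
    infer_instance
  have hπS : ∀ y : LinearMap.ker S.g.hom, S.moduleCatLeftHomologyData.π y = Submodule.Quotient.mk y :=
    fun _ => rfl
  have hπT : ∀ y : LinearMap.ker T.g.hom, T.moduleCatLeftHomologyData.π y = Submodule.Quotient.mk y :=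
    fun _ => rfl
  have hmem : ∀ x : S.X₂, S.g x = 0 → φ.τ₂ x ∈ LinearMap.ker T.g.hom := by
    intro x hx
    have h23 : T.g (φ.τ₂ x) = φ.τ₃ (S.g x) := ConcreteCategory.congr_hom φ.comm₂₃ x
    rw [LinearMap.mem_ker, h23, hx, map_zero]
  have hkey : ∀ (z : LinearMap.ker S.g.hom),
      Hc (S.moduleCatLeftHomologyData.π z) = T.moduleCatLeftHomologyData.π ⟨φ.τ₂ z.1, hmem z.1 z.2⟩ := by
    intro z
    have e1 : S.moduleCatHomologyIso.inv (S.moduleCatLeftHomologyData.π z) =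
        S.homologyπ (S.moduleCatCyclesIso.inv z) :=
      (ConcreteCategory.congr_hom S.moduleCatCyclesIso_inv_π z).symm
    have e2 : ShortComplex.homologyMap φ (S.homologyπ (S.moduleCatCyclesIso.inv z)) =
        T.homologyπ (ShortComplex.cyclesMap φ (S.moduleCatCyclesIso.inv z)) :=
      ConcreteCategory.congr_hom (ShortComplex.homologyπ_naturality φ) _
    have e3 : T.moduleCatHomologyIso.hom
        (T.homologyπ (ShortComplex.cyclesMap φ (S.moduleCatCyclesIso.inv z))) =
        T.moduleCatLeftHomologyData.π
          (T.moduleCatCyclesIso.hom (ShortComplex.cyclesMap φ (S.moduleCatCyclesIso.inv z))) :=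
      ConcreteCategory.congr_hom T.π_moduleCatCyclesIso_hom _
    have e4 : T.moduleCatCyclesIso.hom (ShortComplex.cyclesMap φ (S.moduleCatCyclesIso.inv z)) =
        ⟨φ.τ₂ z.1, hmem z.1 z.2⟩ := by
      apply Subtype.ext
      have h1 : (LinearMap.ker T.g.hom).subtype
          (T.moduleCatCyclesIso.hom (ShortComplex.cyclesMap φ (S.moduleCatCyclesIso.inv z))) =
          T.iCycles (ShortComplex.cyclesMap φ (S.moduleCatCyclesIso.inv z)) :=
        ConcreteCategory.congr_hom T.moduleCatCyclesIso_hom_i _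
      have h2 : T.iCycles (ShortComplex.cyclesMap φ (S.moduleCatCyclesIso.inv z)) =
          φ.τ₂ (S.iCycles (S.moduleCatCyclesIso.inv z)) :=
        ConcreteCategory.congr_hom (ShortComplex.cyclesMap_i φ) _
      have h3 : S.iCycles (S.moduleCatCyclesIso.inv z) = z.1 :=
        ConcreteCategory.congr_hom S.moduleCatCyclesIso_inv_iCycles z
      exact h1.trans (h2.trans (by rw [h3]))
    calc Hc (S.moduleCatLeftHomologyData.π z)
        = T.moduleCatHomologyIso.hom (ShortComplex.homologyMap φ
            (S.moduleCatHomologyIso.inv (S.moduleCatLeftHomologyData.π z))) := rfl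
      _ = T.moduleCatLeftHomologyData.π ⟨φ.τ₂ z.1, hmem z.1 z.2⟩ := by rw [e1, e2, e3, e4]
  constructor
  · intro y hy
    have hsurj : Function.Surjective Hc := by
      rw [← ModuleCat.epi_iff_surjective]
      infer_instance
    obtain ⟨hcl, hhcl⟩ := hsurj (T.moduleCatLeftHomologyData.π ⟨y, hy⟩)
    obtain ⟨z, rfl⟩ := Submodule.Quotient.mk_surjective _ hcl
    rw [show ((Submodule.Quotient.mk z : S.moduleCatLeftHomologyData.H)) = S.moduleCatLeftHomologyData.π z from rfl,
      hkey z, hπT, hπT] at hhcl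
    obtain ⟨w, hw⟩ := (Submodule.Quotient.eq _).1 hhcl
    refine ⟨z.1, -w, z.2, ?_⟩
    have hw' := congrArg Subtype.val hw
    simp only [LinearMap.codRestrict_apply, Submodule.coe_sub] at hw'
    rw [map_neg]
    rw [show T.f w = φ.τ₂ z.1 - y from hw']
    abel
  · rintro x hx ⟨e, he⟩
    have hinj : Function.Injective Hc := by
      rw [← ModuleCat.mono_iff_injective]
      infer_instance
    have h0 : T.moduleCatLeftHomologyData.π ⟨φ.τ₂ x, hmem x hx⟩ = 0 := by
      rw [hπT]
      refine (Submodule.Quotient.mk_eq_zero (p := _)).2 ?_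
      exact ⟨e, Subtype.ext (by simp [he]; rfl)⟩
    have h1 : S.moduleCatLeftHomologyData.π ⟨x, hx⟩ = 0 := hinj (by rw [hkey, map_zero, h0])
    rw [hπS] at h1
    replace h1 := (Submodule.Quotient.mk_eq_zero (p := _)).1 h1
    obtain ⟨w, hw⟩ := h1
    exact ⟨w, congrArg Subtype.val hw⟩


lemma facts {K L : ChainComplex (ModuleCat.{v} R) ℕ} (f : K ⟶ L) [QuasiIso f] (n : ℕ) :
    (∀ b : L.X n, L.d n (n-1) b = 0 →
      ∃ (c : K.X n) (e : L.X (n+1)), K.d n (n-1) c = 0 ∧ f.f n c + L.d (n+1) n e = b) ∧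
    (∀ a : K.X n, K.d n (n-1) a = 0 → (∃ e : L.X (n+1), f.f n a = L.d (n+1) n e) →
      ∃ w : K.X (n+1), K.d (n+1) n w = a) := by
  have hprev : (ComplexShape.down ℕ).prev n = n + 1 := ChainComplex.prev ℕ n
  have hnext : (ComplexShape.down ℕ).next n = n - 1 := by
    cases n with
    | zero => exact ChainComplex.next_nat_zero
    | succ k => exact ChainComplex.next_nat_succ k
  set e := HomologicalComplex.natIsoSc' (ModuleCat.{v} R) (ComplexShape.down ℕ)
    (n+1) n (n-1) hprev hnext with he
  let φ := (HomologicalComplex.shortComplexFunctor (ModuleCat.{v} R) (ComplexShape.down ℕ) n).map f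
  let φ' := (HomologicalComplex.shortComplexFunctor' (ModuleCat.{v} R) (ComplexShape.down ℕ)
    (n+1) n (n-1)).map f
  haveI hiso : IsIso (ShortComplex.homologyMap φ) := by
    have h1 : QuasiIsoAt f n := inferInstance
    rw [quasiIsoAt_iff_isIso_homologyMap] at h1
    exact h1
  have hφ' : φ' = (e.app K).inv ≫ φ ≫ (e.app L).hom := by
    show φ' = (e.app K).inv ≫ φ ≫ e.hom.app L
    rw [e.hom.naturality f]
    simp [Iso.app]
    rfl
  haveI : IsIso (ShortComplex.homologyMap φ') := by
    rw [hφ', ShortComplex.homologyMap_comp, ShortComplex.homologyMap_comp]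
    haveI := homologyMap_isIso_of_iso (e.app K).symm
    haveI := homologyMap_isIso_of_iso (e.app L)
    exact IsIso.comp_isIso
  exact chase φ' this


lemma zero_hom_apply {M N : ModuleCat.{v} R} (x : M) : (0 : M ⟶ N) x = 0 := rfl

lemma dd_apply (K : ChainComplex (ModuleCat.{v} R) ℕ) (i j k : ℕ) (x : K.X i) :
    K.d j k (K.d i j x) = 0 := by
  have h : K.d j k (K.d i j x) = (0 : K.X i ⟶ K.X k) x :=
    ConcreteCategory.congr_hom (K.d_comp_d i j k) x
  rw [h, zero_hom_apply]

lemma lift_ex {Q M N : Type v} [AddCommGroup Q] [Module R Q] [AddCommGroup M] [Module R M]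
    [AddCommGroup N] [Module R N] (hQ : Module.Projective R Q)
    (Φ : M →ₗ[R] N) (τ : Q →ₗ[R] N) (h : ∀ x, τ x ∈ LinearMap.range Φ) :
    ∃ σ : Q →ₗ[R] M, ∀ x, Φ (σ x) = τ x := by
  haveI := hQ
  obtain ⟨σ, hσ⟩ := Module.projective_lifting_property Φ.rangeRestrict
    (τ.codRestrict (LinearMap.range Φ) h) (LinearMap.surjective_rangeRestrict Φ)
  exact ⟨σ, fun x => congrArg Subtype.val (LinearMap.congr_fun hσ x)⟩

lemma key {P C D : ChainComplex (ModuleCat.{v} R) ℕ}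
    (hP : ∀ n, Module.Projective R (P.X n)) (f : C ⟶ D) [QuasiIso f] (v : P ⟶ D) :
    ∃ u : P ⟶ C, Nonempty (Homotopy (u ≫ f) v) := by
  classical
  have SJ := fun n => (facts f n).1
  have IJ := fun n => (facts f n).2
  have fcomm : ∀ (i j : ℕ) (x : C.X i), D.d i j (f.f i x) = f.f j (C.d i j x) :=
    fun i j x => ConcreteCategory.congr_hom (f.comm i j) x
  have vcomm : ∀ (i j : ℕ) (x : P.X i), D.d i j (v.f i x) = v.f j (P.d i j x) :=
    fun i j x => ConcreteCategory.congr_hom (v.comm i j) x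
  let St : ℕ → Type _ := fun n => (P.X n →ₗ[R] C.X n) × (P.X n →ₗ[R] D.X (n+1))
  let Good : ∀ n, St n → Prop := fun n st =>
    (∀ x : P.X (n+1), C.d n (n-1) (st.1 (P.d (n+1) n x)) = 0) ∧
    (∀ x : P.X (n+1), f.f n (st.1 (P.d (n+1) n x)) - v.f n (P.d (n+1) n x)
      - D.d (n+1) n (st.2 (P.d (n+1) n x)) = 0)
  let Cross : ∀ n, St n → St (n+1) → Prop := fun n st st' =>
    (∀ y : P.X (n+1), C.d (n+1) n (st'.1 y) = st.1 (P.d (n+1) n y)) ∧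
    (∀ y : P.X (n+1), f.f (n+1) (st'.1 y) - v.f (n+1) y - D.d (n+2) (n+1) (st'.2 y)
      = st.2 (P.d (n+1) n y))
  -- base
  have base : ∃ st0 : St 0, ∀ x : P.X 0,
      f.f 0 (st0.1 x) - v.f 0 x - D.d 1 0 (st0.2 x) = 0 := by
    have hrange : ∀ x : P.X 0, ((v.f 0).hom : P.X 0 →ₗ[R] D.X 0) x ∈ LinearMap.range
        ((((f.f 0).hom : C.X 0 →ₗ[R] D.X 0).comp (LinearMap.fst R (C.X 0) (D.X 1))) -
          (((D.d 1 0).hom : D.X 1 →ₗ[R] D.X 0).comp (LinearMap.snd R (C.X 0) (D.X 1)))) := by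
      intro x
      obtain ⟨c, e, _, hce⟩ := SJ 0 (v.f 0 x) (by
        show D.d 0 0 (v.f 0 x) = 0
        rw [D.shape 0 0 (by simp)]
        rw [zero_hom_apply])
      refine ⟨(c, -e), ?_⟩
      show f.f 0 c - D.d 1 0 (-e) = v.f 0 x
      rw [map_neg, sub_neg_eq_add, hce]
    obtain ⟨σ, hσ⟩ := lift_ex (hP 0)
      ((((f.f 0).hom : C.X 0 →ₗ[R] D.X 0).comp (LinearMap.fst R (C.X 0) (D.X 1))) -
        (((D.d 1 0).hom : D.X 1 →ₗ[R] D.X 0).comp (LinearMap.snd R (C.X 0) (D.X 1))))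
      ((v.f 0).hom : P.X 0 →ₗ[R] D.X 0) hrange
    refine ⟨⟨(LinearMap.fst R _ _).comp σ, (LinearMap.snd R _ _).comp σ⟩, fun x => ?_⟩
    have h := hσ x
    simp only [LinearMap.sub_apply, LinearMap.comp_apply, LinearMap.fst_apply,
      LinearMap.snd_apply] at h
    show f.f 0 (σ x).1 - v.f 0 x - D.d 1 0 (σ x).2 = 0
    rw [sub_right_comm, h, sub_self]
  -- step
  have step : ∀ n (st : St n), Good n st →
      ∃ st' : St (n+1), Cross n st st' ∧ Good (n+1) st' := by
    intro n st hst
    have hrange : ∀ x : P.X (n+1),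
        (LinearMap.prod (st.1.comp (P.d (n+1) n).hom)
          (((v.f (n+1)).hom : P.X (n+1) →ₗ[R] D.X (n+1)) + st.2.comp (P.d (n+1) n).hom)) x ∈
        LinearMap.range (LinearMap.prod
          (((C.d (n+1) n).hom : C.X (n+1) →ₗ[R] C.X n).comp
            (LinearMap.fst R (C.X (n+1)) (D.X (n+2))))
          ((((f.f (n+1)).hom : C.X (n+1) →ₗ[R] D.X (n+1)).comp
            (LinearMap.fst R (C.X (n+1)) (D.X (n+2)))) -
           (((D.d (n+2) (n+1)).hom : D.X (n+2) →ₗ[R] D.X (n+1)).comp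
            (LinearMap.snd R (C.X (n+1)) (D.X (n+2)))))) := by
      intro x
      have hacyc : C.d n (n-1) (st.1 (P.d (n+1) n x)) = 0 := hst.1 x
      have hdb : D.d (n+1) n (v.f (n+1) x + st.2 (P.d (n+1) n x))
          = f.f n (st.1 (P.d (n+1) n x)) := by
        rw [map_add, vcomm (n+1) n x]
        have h2 := hst.2 x
        rw [sub_sub, sub_eq_zero] at h2
        exact h2.symm
      obtain ⟨c₀, hc₀⟩ := IJ n (st.1 (P.d (n+1) n x)) hacyc
        ⟨v.f (n+1) x + st.2 (P.d (n+1) n x), hdb.symm⟩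
      obtain ⟨z, e2, hzcyc, hze⟩ := SJ (n+1)
        ((v.f (n+1) x + st.2 (P.d (n+1) n x)) - f.f (n+1) c₀) (by
          show D.d (n+1) n _ = 0
          rw [map_sub, hdb, fcomm (n+1) n c₀, hc₀, sub_self])
      refine ⟨(c₀ + z, -e2), ?_⟩
      have h1 : C.d (n+1) n (c₀ + z) = st.1 (P.d (n+1) n x) := by
        rw [map_add, hc₀]
        have hz : C.d (n+1) n z = 0 := hzcyc
        rw [hz, add_zero]
      have h2 : f.f (n+1) (c₀ + z) - D.d (n+2) (n+1) (-e2)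
          = v.f (n+1) x + st.2 (P.d (n+1) n x) := by
        rw [map_neg, sub_neg_eq_add, map_add, add_assoc, hze]
        abel
      exact Prod.ext h1 h2
    obtain ⟨σ, hσ⟩ := lift_ex (hP (n+1))
      (LinearMap.prod
        (((C.d (n+1) n).hom : C.X (n+1) →ₗ[R] C.X n).comp
          (LinearMap.fst R (C.X (n+1)) (D.X (n+2))))
        ((((f.f (n+1)).hom : C.X (n+1) →ₗ[R] D.X (n+1)).comp
          (LinearMap.fst R (C.X (n+1)) (D.X (n+2)))) -
         (((D.d (n+2) (n+1)).hom : D.X (n+2) →ₗ[R] D.X (n+1)).comp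
          (LinearMap.snd R (C.X (n+1)) (D.X (n+2))))))
      (LinearMap.prod (st.1.comp (P.d (n+1) n).hom)
        (((v.f (n+1)).hom : P.X (n+1) →ₗ[R] D.X (n+1)) + st.2.comp (P.d (n+1) n).hom)) hrange
    refine ⟨⟨(LinearMap.fst R _ _).comp σ, (LinearMap.snd R _ _).comp σ⟩, ?_⟩
    have hc1 : ∀ y : P.X (n+1), C.d (n+1) n ((σ y).1) = st.1 (P.d (n+1) n y) :=
      fun y => congrArg Prod.fst (hσ y)
    have hc2 : ∀ y : P.X (n+1), f.f (n+1) ((σ y).1) - v.f (n+1) y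
        - D.d (n+2) (n+1) ((σ y).2) = st.2 (P.d (n+1) n y) := by
      intro y
      have h2 : f.f (n+1) ((σ y).1) - D.d (n+2) (n+1) ((σ y).2)
          = v.f (n+1) y + st.2 (P.d (n+1) n y) := congrArg Prod.snd (hσ y)
      rw [sub_right_comm, h2, add_sub_cancel_left]
    refine ⟨⟨hc1, hc2⟩, fun x => ?_, fun x => ?_⟩
    · have h := hc1 (P.d (n+2) (n+1) x)
      rw [dd_apply P (n+2) (n+1) n x, map_zero] at h
      exact h
    · have h := hc2 (P.d (n+2) (n+1) x)
      rw [dd_apply P (n+2) (n+1) n x, map_zero] at h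
      exact h
  -- build the sequence
  obtain ⟨st0, hst0⟩ := base
  have good0 : Good 0 st0 := by
    constructor
    · intro x
      show C.d 0 0 (st0.1 (P.d 1 0 x)) = 0
      rw [C.shape 0 0 (by simp)]
      rw [zero_hom_apply]
    · intro x
      exact hst0 (P.d 1 0 x)
  have stepEx : ∀ n (st : St n), ∃ st' : St (n+1),
      Good n st → Cross n st st' ∧ Good (n+1) st' := by
    intro n st
    by_cases h : Good n st
    · obtain ⟨st', h1, h2⟩ := step n st h
      exact ⟨st', fun _ => ⟨h1, h2⟩⟩
    · exact ⟨⟨0, 0⟩, fun hg => absurd hg h⟩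
  choose stp hstp using stepEx
  let s : ∀ n, St n := fun n => Nat.rec st0 stp n
  have good : ∀ n, Good n (s n) := by
    intro n
    induction n with
    | zero => exact good0
    | succ k ih => exact (hstp k (s k) ih).2
  have cross : ∀ n, Cross n (s n) (s (n+1)) := fun n => (hstp n (s n) (good n)).1
  -- the chain map
  let u : P ⟶ C := {
    f := fun n => (ModuleCat.ofHom (s n).1 : P.X n ⟶ C.X n)
    comm' := by
      intro i j hij
      obtain rfl : j + 1 = i := hij
      apply ModuleCat.hom_ext
      apply LinearMap.ext
      intro y
      exact (cross j).1 y }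
  refine ⟨u, ⟨{
    hom := fun i j => if h : i + 1 = j then
      (ModuleCat.ofHom (s i).2 : P.X i ⟶ D.X (i+1)) ≫ eqToHom (by rw [h]) else 0
    zero := fun i j hij => dif_neg hij
    comm := ?_ }⟩⟩
  intro i
  cases i with
  | zero =>
    rw [Homotopy.dNext_zero_chainComplex, Homotopy.prevD_chainComplex]
    rw [dif_pos rfl]
    simp only [eqToHom_refl, Category.comp_id]
    apply ModuleCat.hom_ext
    apply LinearMap.ext
    intro x
    show f.f 0 (st0.1 x) = 0 + D.d 1 0 (st0.2 x) + v.f 0 x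
    have h0 := hst0 x
    rw [sub_sub, sub_eq_zero] at h0
    rw [h0]
    abel
  | succ n =>
    rw [Homotopy.dNext_succ_chainComplex, Homotopy.prevD_chainComplex]
    rw [dif_pos rfl, dif_pos rfl]
    simp only [eqToHom_refl, Category.comp_id]
    apply ModuleCat.hom_ext
    apply LinearMap.ext
    intro x
    show f.f (n+1) ((s (n+1)).1 x)
      = (s n).2 (P.d (n+1) n x) + D.d (n+2) (n+1) ((s (n+1)).2 x) + v.f (n+1) x
    have hc := (cross n).2 x
    rw [sub_sub, sub_eq_iff_eq_add] at hc
    rw [hc]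
    abel

lemma whitehead {C D : ChainComplex (ModuleCat.{v} R) ℕ}
    (hC : ∀ n, Module.Projective R (C.X n)) (hD : ∀ n, Module.Projective R (D.X n))
    (f : C ⟶ D) (hf : QuasiIso f) :
    ∃ g : D ⟶ C, Nonempty (Homotopy (f ≫ g) (𝟙 C)) ∧ Nonempty (Homotopy (g ≫ f) (𝟙 D)) := by
  haveI := hf
  obtain ⟨g, ⟨H2⟩⟩ := key hD f (𝟙 D)
  haveI : QuasiIso g := by
    rw [quasiIso_iff]
    intro n
    rw [quasiIsoAt_iff_isIso_homologyMap]
    have hcomp : HomologicalComplex.homologyMap g n ≫ HomologicalComplex.homologyMap f n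
        = 𝟙 _ := by
      rw [← HomologicalComplex.homologyMap_comp, H2.homologyMap_eq,
        HomologicalComplex.homologyMap_id]
    haveI : IsIso (HomologicalComplex.homologyMap f n) := by
      have h1 : QuasiIsoAt f n := inferInstance
      rwa [quasiIsoAt_iff_isIso_homologyMap] at h1
    haveI : IsIso (HomologicalComplex.homologyMap g n ≫
        HomologicalComplex.homologyMap f n) := by
      rw [hcomp]; infer_instance
    exact IsIso.of_isIso_comp_right _ (HomologicalComplex.homologyMap f n)
  obtain ⟨h, ⟨H1⟩⟩ := key hC g (𝟙 C)
  refine ⟨g, ⟨?_⟩, ⟨H2⟩⟩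
  exact (Homotopy.ofEq (Category.id_comp (f ≫ g)).symm).trans
    (((H1.symm.compRight (f ≫ g))).trans
      ((Homotopy.ofEq (by simp only [Category.assoc])).trans
        (((H2.compRight g).compLeft h).trans
          ((Homotopy.ofEq (by simp)).trans H1))))

end QIWhitehead


/-- A quasi-isomorphism between nonnegatively graded chain complexes of free modules over a
group ring is a chain homotopy equivalence: let `π` be a group, `R = ℤ[π]` its integral group
ring, and `C`, `D` chain complexes of `R`-modules indexed by `ℕ` all of whose terms are free
`R`-modules. If `f : C ⟶ D` induces an isomorphism on homology in every degree, then there is a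
chain map `g : D ⟶ C` together with chain homotopies from `f ≫ g` to `𝟙 C` and from `g ≫ f`
to `𝟙 D`. -/
theorem quasiIso_of_free_is_homotopyEquiv (π : Type*) [Group π]
    (C D : ChainComplex (ModuleCat (MonoidAlgebra ℤ π)) ℕ)
    (hC : ∀ n, Module.Free (MonoidAlgebra ℤ π) (C.X n))
    (hD : ∀ n, Module.Free (MonoidAlgebra ℤ π) (D.X n))
    (f : C ⟶ D) (hf : QuasiIso f) :
    ∃ g : D ⟶ C,
      Nonempty (Homotopy (f ≫ g) (𝟙 C)) ∧ Nonempty (Homotopy (g ≫ f) (𝟙 D)) := by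
  refine QIWhitehead.whitehead (fun n => ?_) (fun n => ?_) f hf
  · haveI := hC n
    infer_instance
  · haveI := hD n
    infer_instance
end
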